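/- The Pauli twirl of a channel is a Pauli channel with Bell-measurement error rates: For any quantum channel N on ℂ^d, the Pauli-twirled channel N^W(ρ) = (1/d²)∑_{z,x} W^{z,x}† N(W^{z,x} ρ W^{z,x}†) W^{z,x} has Choi matrix C(N^W) = ∑_{z,x} Tr[Φ^{z,x} C(N)] Φ^{z,x}; in particular N^W is a Pauli channel with error rates p(z,x) = (1/d)Tr[Φ^{z,x} C(N)] forming a probability distribution. -/

import Mathlib

open Matrix Kronecker Finset

/-- The Heisenberg–Weyl operator `W^{z,x} = Z(z)X(x)` on `ℂ^d`. -/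
noncomputable def HW (d : ℕ) [NeZero d] (z x : ZMod d) : Matrix (ZMod d) (ZMod d) ℂ :=
  Matrix.of fun j k =>
    Complex.exp (2 * Real.pi * Complex.I * (j.val * z.val) / d) * (if j = k + x then 1 else 0)

/-- The unnormalized maximally entangled operator `|Γ⟩⟨Γ|`, `|Γ⟩ = ∑_k |k,k⟩`. -/
noncomputable def gammaMat (d : ℕ) [NeZero d] :
    Matrix (ZMod d × ZMod d) (ZMod d × ZMod d) ℂ :=
  Matrix.of fun p q => (if p.1 = p.2 then 1 else 0) * (if q.1 = q.2 then 1 else 0)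

/-- The Choi matrix `C(N) = (id ⊗ N)(|Γ⟩⟨Γ|)` of the channel with Kraus operators `K l`. -/
noncomputable def choiOfKraus (d r : ℕ) [NeZero d]
    (K : Fin r → Matrix (ZMod d) (ZMod d) ℂ) :
    Matrix (ZMod d × ZMod d) (ZMod d × ZMod d) ℂ :=
  ∑ l, ((1 : Matrix (ZMod d) (ZMod d) ℂ) ⊗ₖ K l) * gammaMat d *
    ((1 : Matrix (ZMod d) (ZMod d) ℂ) ⊗ₖ K l)ᴴ

/-- The qudit Bell projector `Φ^{z,x}`. -/
noncomputable def quditBellProj (d : ℕ) [NeZero d] (z x : ZMod d) :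
    Matrix (ZMod d × ZMod d) (ZMod d × ZMod d) ℂ :=
  Matrix.of fun p q =>
    (d : ℂ)⁻¹ * HW d z x p.2 p.1 * starRingEnd ℂ (HW d z x q.2 q.1)

/-! ### Helper: roots of unity -/

noncomputable def zet (d : ℕ) : ℂ := Complex.exp (2 * Real.pi * Complex.I / d)

lemma zet_ne_zero (d : ℕ) : zet d ≠ 0 := Complex.exp_ne_zero _

noncomputable def ee (d : ℕ) (n : ℤ) : ℂ := zet d ^ n

lemma ee_add (d : ℕ) (m n : ℤ) : ee d (m + n) = ee d m * ee d n :=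
  zpow_add₀ (zet_ne_zero d) m n

lemma ee_eq_exp (d : ℕ) (n : ℤ) : ee d n = Complex.exp (n * (2 * Real.pi * Complex.I / d)) := by
  rw [Complex.exp_int_mul]; rfl

lemma star_ee (d : ℕ) (n : ℤ) : (starRingEnd ℂ) (ee d n) = ee d (-n) := by
  rw [ee_eq_exp, ee_eq_exp, ← Complex.exp_conj]
  congr 1
  simp only [_root_.map_mul, map_div₀, Complex.conj_I, map_ofNat, map_intCast, map_natCast,
    Complex.conj_ofReal]
  push_cast
  ring

lemma hw_prim (d : ℕ) [NeZero d] : IsPrimitiveRoot (zet d) d := by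
  have := Complex.isPrimitiveRoot_exp d (NeZero.ne d)
  convert this using 2
  rfl

lemma ee_eq_one_iff (d : ℕ) [NeZero d] (n : ℤ) : ee d n = 1 ↔ (d : ℤ) ∣ n :=
  (hw_prim d).zpow_eq_one_iff_dvd n

lemma sum_ee (d : ℕ) [NeZero d] (k : ℤ) :
    ∑ z : ZMod d, ee d (k * z.val) = if (k : ZMod d) = 0 then (d : ℂ) else 0 := by
  have hrw : ∀ z : ZMod d, ee d (k * z.val) = (zet d ^ k) ^ (z.val : ℕ) := by
    intro z
    rw [ee, _root_.zpow_mul, zpow_natCast]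
  simp_rw [hrw]
  have hbij : ∑ z : ZMod d, (zet d ^ k) ^ (z.val : ℕ) = ∑ i ∈ range d, (zet d ^ k) ^ i := by
    apply Finset.sum_nbij' (fun z : ZMod d => z.val) (fun i => (i : ZMod d))
    · intro z _; exact mem_range.mpr (ZMod.val_lt z)
    · intro i _; exact mem_univ _
    · intro z _; exact ZMod.natCast_rightInverse z
    · intro i hi; exact ZMod.val_cast_of_lt (mem_range.mp hi)
    · intro z _; rfl
  rw [hbij]
  by_cases h : (k : ZMod d) = 0
  · have h1 : zet d ^ k = 1 := (ee_eq_one_iff d k).mpr ((ZMod.intCast_zmod_eq_zero_iff_dvd k d).mp h)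
    simp [h1, h]
  · have h1 : zet d ^ k ≠ 1 := fun hc =>
      h ((ZMod.intCast_zmod_eq_zero_iff_dvd k d).mpr ((ee_eq_one_iff d k).mp hc))
    rw [geom_sum_eq h1]
    have : (zet d ^ k) ^ d = 1 := by
      rw [← zpow_natCast, ← _root_.zpow_mul, mul_comm, _root_.zpow_mul, zpow_natCast,
        (hw_prim d).pow_eq_one, _root_.one_zpow]
    simp [this, h]

lemma valZ_cast (d : ℕ) [NeZero d] (a : ZMod d) : (((a.val : ℤ) : ZMod d)) = a := by
  rw [Int.cast_natCast]
  exact ZMod.natCast_rightInverse a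

/-! ### Entry computations -/

lemma hw_apply (d : ℕ) [NeZero d] (z x : ZMod d) (j k : ZMod d) :
    HW d z x j k = ee d ((j.val : ℤ) * z.val) * (if j = k + x then 1 else 0) := by
  rw [HW, Matrix.of_apply, ee_eq_exp]
  congr 2
  push_cast
  ring

lemma choi_term_apply (d : ℕ) [NeZero d] (M : Matrix (ZMod d) (ZMod d) ℂ)
    (p q : ZMod d × ZMod d) :
    (((1 : Matrix (ZMod d) (ZMod d) ℂ) ⊗ₖ M) * gammaMat d *
      ((1 : Matrix (ZMod d) (ZMod d) ℂ) ⊗ₖ M)ᴴ) p q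
      = M p.2 p.1 * (starRingEnd ℂ) (M q.2 q.1) := by
  simp only [Matrix.mul_apply, Matrix.conjTranspose_apply, Matrix.kroneckerMap_apply,
    gammaMat, Matrix.of_apply, Matrix.one_apply, Fintype.sum_prod_type, star_one, star_zero,
    ite_mul, one_mul, zero_mul, mul_ite, mul_zero, mul_one, apply_ite (starRingEnd ℂ), map_zero]
  simp [apply_ite (starRingEnd ℂ), Finset.sum_ite_eq, Finset.sum_ite_eq', mul_comm]

lemma choi_apply (d r : ℕ) [NeZero d] (K : Fin r → Matrix (ZMod d) (ZMod d) ℂ)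
    (p q : ZMod d × ZMod d) :
    choiOfKraus d r K p q = ∑ l, K l p.2 p.1 * (starRingEnd ℂ) (K l q.2 q.1) := by
  rw [choiOfKraus, Matrix.sum_apply]
  exact Finset.sum_congr rfl fun l _ => choi_term_apply d (K l) p q

lemma hwKhw (d : ℕ) [NeZero d] (z x : ZMod d) (K : Matrix (ZMod d) (ZMod d) ℂ) (b a : ZMod d) :
    ((HW d z x)ᴴ * K * HW d z x) b a
      = ee d (((((a + x).val : ℤ)) - (((b + x).val : ℤ))) * z.val) * K (b + x) (a + x) := by
  simp only [Matrix.mul_apply, Matrix.conjTranspose_apply, hw_apply, Complex.star_def,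
    _root_.map_mul, apply_ite (starRingEnd ℂ), _root_.map_one, _root_.map_zero, star_ee,
    ite_mul, mul_ite, mul_zero, zero_mul, mul_one, one_mul]
  simp only [Finset.sum_ite_eq', Finset.mem_univ, if_true]
  rw [show ((((a + x).val : ℤ)) - (((b + x).val : ℤ))) * (z.val : ℤ)
      = (-(((b + x).val : ℤ) * z.val)) + ((a + x).val : ℤ) * z.val by ring, ee_add]
  ring

/-! ### Trace formula -/

noncomputable def AA (d r : ℕ) [NeZero d] (K : Fin r → Matrix (ZMod d) (ZMod d) ℂ)
    (z x : ZMod d) (l : Fin r) : ℂ :=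
  ∑ s : ZMod d, ee d (-((((s + x).val : ℤ)) * z.val)) * K l (s + x) s

lemma trace_formula (d r : ℕ) [NeZero d] (K : Fin r → Matrix (ZMod d) (ZMod d) ℂ)
    (z x : ZMod d) :
    (quditBellProj d z x * choiOfKraus d r K).trace
      = (d : ℂ)⁻¹ * ∑ l, AA d r K z x l * (starRingEnd ℂ) (AA d r K z x l) := by
  rw [Matrix.trace]
  simp only [Matrix.diag_apply, Matrix.mul_apply, quditBellProj, Matrix.of_apply, choi_apply,
    hw_apply, Complex.star_def, _root_.map_mul, apply_ite (starRingEnd ℂ), _root_.map_one,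
    _root_.map_zero, star_ee, ite_mul, mul_ite, mul_zero, zero_mul, mul_one, one_mul,
    Fintype.sum_prod_type]
  simp only [Finset.sum_ite_eq', Finset.mem_univ, if_true]
  conv_lhs => enter [2, p1]; rw [Finset.sum_comm]
  simp only [Finset.sum_ite_eq', Finset.mem_univ, if_true]
  simp only [AA, map_sum, _root_.map_mul, star_ee, neg_neg, Finset.mul_sum]
  conv_lhs => enter [2, p1]; rw [Finset.sum_comm]
  rw [Finset.sum_comm]
  refine Finset.sum_congr rfl fun l _ => ?_
  simp_rw [Finset.sum_mul, Finset.mul_sum]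
  refine Finset.sum_congr rfl fun p1 _ => Finset.sum_congr rfl fun q1 _ => ?_
  ring

/-! ### Character sums -/

lemma char_sum (d : ℕ) [NeZero d] (a b : ZMod d) :
    ∑ z : ZMod d, ee d (-((a.val : ℤ) * z.val)) * ee d ((b.val : ℤ) * z.val)
      = if b = a then (d : ℂ) else 0 := by
  have h : ∀ z : ZMod d, ee d (-((a.val : ℤ) * z.val)) * ee d ((b.val : ℤ) * z.val)
      = ee d (((b.val : ℤ) - (a.val : ℤ)) * z.val) := by
    intro z
    rw [← ee_add]
    congr 1
    ring
  simp_rw [h, sum_ee]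
  have : ((((b.val : ℤ) - (a.val : ℤ)) : ℤ) : ZMod d) = b - a := by
    push_cast
    simp [ZMod.natCast_val, ZMod.cast_id]
  rw [this]
  by_cases hab : b = a <;> simp [hab, sub_eq_zero]

lemma sum_z_AA (d r : ℕ) [NeZero d] (K : Fin r → Matrix (ZMod d) (ZMod d) ℂ)
    (x : ZMod d) (l : Fin r) :
    ∑ z : ZMod d, AA d r K z x l * (starRingEnd ℂ) (AA d r K z x l)
      = (d : ℂ) * ∑ s : ZMod d, K l (s + x) s * (starRingEnd ℂ) (K l (s + x) s) := by
  simp only [AA, map_sum, _root_.map_mul, star_ee, neg_neg]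
  simp_rw [Finset.sum_mul_sum]
  rw [Finset.sum_comm]
  rw [Finset.mul_sum]
  refine Finset.sum_congr rfl fun s _ => ?_
  rw [Finset.sum_comm]
  have h : ∀ t z : ZMod d,
      (ee d (-(((s + x).val : ℤ) * z.val)) * K l (s + x) s) *
        (ee d (((t + x).val : ℤ) * z.val) * (starRingEnd ℂ) (K l (t + x) t))
      = (ee d (-(((s + x).val : ℤ) * z.val)) * ee d (((t + x).val : ℤ) * z.val)) *
          (K l (s + x) s * (starRingEnd ℂ) (K l (t + x) t)) := by
    intro t z
    ring
  simp_rw [h, ← Finset.sum_mul, char_sum, add_left_inj, ite_mul, zero_mul]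
  simp [Finset.sum_ite_eq', Finset.mem_univ]

/-! ### Parts 2 and 3 -/

lemma p_real (d r : ℕ) [NeZero d] (K : Fin r → Matrix (ZMod d) (ZMod d) ℂ) (z x : ZMod d) :
    (d : ℂ)⁻¹ * (quditBellProj d z x * choiOfKraus d r K).trace
      = ((((d : ℝ)⁻¹ * ((d : ℝ)⁻¹ * ∑ l, Complex.normSq (AA d r K z x l))) : ℝ) : ℂ) := by
  rw [trace_formula]
  simp_rw [Complex.mul_conj]
  push_cast
  ring

lemma sum_p (d r : ℕ) [NeZero d] (K : Fin r → Matrix (ZMod d) (ZMod d) ℂ)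
    (hK : (∑ l, (K l)ᴴ * K l) = 1) :
    ∑ z : ZMod d, ∑ x : ZMod d,
      (d : ℂ)⁻¹ * (quditBellProj d z x * choiOfKraus d r K).trace = 1 := by
  have hd0 : (d : ℂ) ≠ 0 := Nat.cast_ne_zero.mpr (NeZero.ne d)
  have htr : ∑ l, ∑ k : ZMod d, ∑ j : ZMod d, K l j k * (starRingEnd ℂ) (K l j k) = (d : ℂ) := by
    have h1 := congrArg Matrix.trace hK
    rw [Matrix.trace_sum] at h1
    simp only [Matrix.trace, Matrix.diag_apply, Matrix.mul_apply, Matrix.conjTranspose_apply,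
      Matrix.trace_one, Complex.star_def] at h1
    have h2 : (∑ x : ZMod d, (1 : Matrix (ZMod d) (ZMod d) ℂ) x x) = (d : ℂ) := by
      simp [Matrix.one_apply, ZMod.card]
    rw [h2] at h1
    rw [← h1]
    exact Finset.sum_congr rfl fun l _ => Finset.sum_congr rfl fun k _ =>
      Finset.sum_congr rfl fun j _ => mul_comm _ _
  simp_rw [trace_formula]
  rw [Finset.sum_comm]
  have step1 : ∀ x : ZMod d,
      ∑ z : ZMod d, (d : ℂ)⁻¹ * ((d : ℂ)⁻¹ * ∑ l, AA d r K z x l * (starRingEnd ℂ) (AA d r K z x l))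
      = (d : ℂ)⁻¹ * ∑ l, ∑ s : ZMod d, K l (s + x) s * (starRingEnd ℂ) (K l (s + x) s) := by
    intro x
    rw [← Finset.mul_sum, ← Finset.mul_sum, Finset.sum_comm]
    simp_rw [sum_z_AA, ← Finset.mul_sum]
    field_simp
  simp_rw [step1]
  rw [← Finset.mul_sum, Finset.sum_comm]
  have step2 : ∀ l, ∑ x : ZMod d, ∑ s : ZMod d, K l (s + x) s * (starRingEnd ℂ) (K l (s + x) s)
      = ∑ k : ZMod d, ∑ j : ZMod d, K l j k * (starRingEnd ℂ) (K l j k) := by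
    intro l
    rw [Finset.sum_comm]
    refine Finset.sum_congr rfl fun s _ => ?_
    exact Fintype.sum_equiv (Equiv.addLeft s) _ _ fun x => rfl
  simp_rw [step2, htr]
  field_simp

/-! ### Part 1: entries -/

lemma ee_combine (d : ℕ) (Aa Bb zz : ℤ) (c1 c2 : ℂ) :
    (ee d (Aa * zz) * c1) * (ee d (-(Bb * zz)) * c2)
      = ee d ((Aa - Bb) * zz) * (c1 * c2) := by
  rw [show (Aa - Bb) * zz = Aa * zz + -(Bb * zz) by ring, ee_add]
  ring

lemma lhs_entry (d r : ℕ) [NeZero d] (K : Fin r → Matrix (ZMod d) (ZMod d) ℂ)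
    (p q : ZMod d × ZMod d) :
    (((d : ℂ) ^ 2)⁻¹ • ∑ z : ZMod d, ∑ x : ZMod d, ∑ l,
        ((1 : Matrix (ZMod d) (ZMod d) ℂ) ⊗ₖ ((HW d z x)ᴴ * K l * HW d z x)) * gammaMat d *
          ((1 : Matrix (ZMod d) (ZMod d) ℂ) ⊗ₖ ((HW d z x)ᴴ * K l * HW d z x))ᴴ) p q
      = (if p.1 - p.2 - q.1 + q.2 = 0 then (d : ℂ)⁻¹ else 0) *
          ∑ x : ZMod d, ∑ l, K l (p.2 + x) (p.1 + x) *
            (starRingEnd ℂ) (K l (q.2 + x) (q.1 + x)) := by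
  simp only [Matrix.smul_apply, Matrix.sum_apply, choi_term_apply, hwKhw, _root_.map_mul,
    star_ee, smul_eq_mul]
  rw [Finset.sum_comm]
  conv_lhs => enter [2, 2, x]; rw [Finset.sum_comm]
  simp_rw [ee_combine, ← Finset.sum_mul, sum_ee]
  have hc : ∀ x : ZMod d,
      (((((p.1 + x).val : ℤ) - ((p.2 + x).val : ℤ)) -
        (((q.1 + x).val : ℤ) - ((q.2 + x).val : ℤ)) : ℤ) : ZMod d)
      = p.1 - p.2 - q.1 + q.2 := by
    intro x
    push_cast
    simp only [ZMod.natCast_val, ZMod.cast_id]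
    ring
  simp_rw [hc, ← Finset.mul_sum]
  have hd0 : (d : ℂ) ≠ 0 := Nat.cast_ne_zero.mpr (NeZero.ne d)
  by_cases h : p.1 - p.2 - q.1 + q.2 = 0
  · simp only [h, if_true]
    rw [sq, mul_inv, mul_assoc, ← mul_assoc ((d:ℂ)⁻¹) (d:ℂ), inv_mul_cancel₀ hd0, one_mul]
  · simp [h]

lemma eq_add_iff' (d : ℕ) [NeZero d] (a b x : ZMod d) : (a = b + x) ↔ (x = a - b) := by
  constructor
  · intro h; rw [h]; ring
  · intro h; rw [h]; ring

lemma ee_combine4 (d : ℕ) (A B C D zz : ℤ) (u v w : ℂ) :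
    u * (ee d (-(A * zz)) * v * (ee d (B * zz) * w)) * (u * ee d (C * zz) * ee d (-(D * zz)))
      = ee d ((B - A + C - D) * zz) * (u * u * (v * w)) := by
  rw [show (B - A + C - D) * zz = -(A * zz) + (B * zz) + (C * zz) + -(D * zz) by ring,
    ee_add, ee_add, ee_add]
  ring

lemma rhs_entry (d r : ℕ) [NeZero d] (K : Fin r → Matrix (ZMod d) (ZMod d) ℂ)
    (p q : ZMod d × ZMod d) :
    (∑ z : ZMod d, ∑ x : ZMod d,
        ((quditBellProj d z x * choiOfKraus d r K).trace) • quditBellProj d z x) p q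
      = (if q.2 - q.1 = p.2 - p.1 then (d : ℂ)⁻¹ else 0) *
          ∑ l, ∑ s : ZMod d, K l (s + (p.2 - p.1)) s *
            (starRingEnd ℂ) (K l (s + (q.2 - p.1)) (s + (q.2 - p.2))) := by
  simp_rw [trace_formula]
  simp only [Matrix.sum_apply, Matrix.smul_apply, smul_eq_mul, quditBellProj,
    Matrix.of_apply, hw_apply, _root_.map_mul, apply_ite (starRingEnd ℂ), _root_.map_one,
    _root_.map_zero, star_ee, mul_ite, ite_mul, mul_zero, zero_mul, mul_one, one_mul]
  simp_rw [eq_add_iff']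
  simp only [Finset.sum_ite_eq', Finset.mem_univ, if_true]
  by_cases h : q.2 - q.1 = p.2 - p.1
  · simp only [h, if_true]
    simp only [AA, map_sum, _root_.map_mul, star_ee, neg_neg]
    simp_rw [Finset.sum_mul_sum, Finset.mul_sum, Finset.sum_mul]
    rw [Finset.sum_comm]
    conv_lhs => enter [2, l]; rw [Finset.sum_comm]
    conv_lhs => enter [2, l, 2, s]; rw [Finset.sum_comm]
    simp_rw [ee_combine4, ← Finset.sum_mul, sum_ee]
    have hcond : ∀ t s : ZMod d,
        (((((t + (p.2 - p.1)).val : ℤ) - ((s + (p.2 - p.1)).val : ℤ)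
          + (p.2.val : ℤ) - (q.2.val : ℤ)) : ℤ) : ZMod d) = 0 ↔ t = s + q.2 - p.2 := by
      intro t s
      push_cast
      simp only [ZMod.natCast_val, ZMod.cast_id]
      constructor
      · intro hh; linear_combination hh
      · intro hh; linear_combination hh
    simp_rw [hcond, ite_mul, zero_mul, Finset.sum_ite_eq', Finset.mem_univ, if_true]
    have hd0 : (d : ℂ) ≠ 0 := Nat.cast_ne_zero.mpr (NeZero.ne d)
    refine Finset.sum_congr rfl fun l _ => Finset.sum_congr rfl fun s _ => ?_
    rw [show s + q.2 - p.2 + (p.2 - p.1) = s + (q.2 - p.1) by ring,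
      show s + q.2 - p.2 = s + (q.2 - p.2) by ring,
      show ((d : ℂ)) * ((d:ℂ)⁻¹ * (d:ℂ)⁻¹ * (K l (s + (p.2 - p.1)) s *
        (starRingEnd ℂ) (K l (s + (q.2 - p.1)) (s + (q.2 - p.2)))))
        = ((d:ℂ) * (d:ℂ)⁻¹) * ((d:ℂ)⁻¹ * (K l (s + (p.2 - p.1)) s *
        (starRingEnd ℂ) (K l (s + (q.2 - p.1)) (s + (q.2 - p.2))))) by ring,
      mul_inv_cancel₀ hd0, one_mul]
  · simp [h]

lemma entries_eq (d r : ℕ) [NeZero d] (K : Fin r → Matrix (ZMod d) (ZMod d) ℂ)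
    (p q : ZMod d × ZMod d) :
    (if p.1 - p.2 - q.1 + q.2 = 0 then (d : ℂ)⁻¹ else 0) *
        ∑ x : ZMod d, ∑ l, K l (p.2 + x) (p.1 + x) *
          (starRingEnd ℂ) (K l (q.2 + x) (q.1 + x))
      = (if q.2 - q.1 = p.2 - p.1 then (d : ℂ)⁻¹ else 0) *
          ∑ l, ∑ s : ZMod d, K l (s + (p.2 - p.1)) s *
            (starRingEnd ℂ) (K l (s + (q.2 - p.1)) (s + (q.2 - p.2))) := by
  by_cases h : q.2 - q.1 = p.2 - p.1
  · have h1 : p.1 - p.2 - q.1 + q.2 = 0 := by linear_combination h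
    simp only [h, h1, if_true]
    congr 1
    rw [Finset.sum_comm]
    refine Finset.sum_congr rfl fun l _ => ?_
    refine Fintype.sum_equiv (Equiv.addLeft p.1) _ _ fun x => ?_
    simp only [Equiv.coe_addLeft]
    rw [show p.1 + x + (p.2 - p.1) = p.2 + x by ring,
      show p.1 + x + (q.2 - p.1) = q.2 + x by ring,
      show p.1 + x + (q.2 - p.2) = q.1 + x by linear_combination h]
  · have h1 : ¬(p.1 - p.2 - q.1 + q.2 = 0) := fun hc => h (by linear_combination hc)
    simp [h, h1]

theorem pauli_twirl_is_pauli_channel (d r : ℕ) [NeZero d] (hd : 2 ≤ d)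
    (K : Fin r → Matrix (ZMod d) (ZMod d) ℂ)
    (hK : (∑ l, (K l)ᴴ * K l) = 1)
    (p : ZMod d → ZMod d → ℂ)
    (hp : ∀ z x, p z x = (d : ℂ)⁻¹ * (quditBellProj d z x * choiOfKraus d r K).trace) :
    (((d : ℂ) ^ 2)⁻¹ • ∑ z : ZMod d, ∑ x : ZMod d, ∑ l,
        ((1 : Matrix (ZMod d) (ZMod d) ℂ) ⊗ₖ ((HW d z x)ᴴ * K l * HW d z x)) * gammaMat d *
          ((1 : Matrix (ZMod d) (ZMod d) ℂ) ⊗ₖ ((HW d z x)ᴴ * K l * HW d z x))ᴴ)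
      = (∑ z : ZMod d, ∑ x : ZMod d,
          ((quditBellProj d z x * choiOfKraus d r K).trace) • quditBellProj d z x) ∧
    (∀ z x, (p z x).im = 0 ∧ 0 ≤ (p z x).re) ∧
    (∑ z : ZMod d, ∑ x : ZMod d, p z x) = 1 := by
  refine ⟨?_, ?_, ?_⟩
  · ext pp qq
    rw [lhs_entry d r K pp qq, rhs_entry d r K pp qq]
    exact entries_eq d r K pp qq
  · intro z x
    rw [hp, p_real]
    constructor
    · simp
    · simp only [Complex.ofReal_re]
      have h1 : (0:ℝ) ≤ ∑ l, Complex.normSq (AA d r K z x l) :=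
        Finset.sum_nonneg fun l _ => Complex.normSq_nonneg _
      have h2 : (0:ℝ) ≤ ((d:ℝ))⁻¹ := by positivity
      exact mul_nonneg h2 (mul_nonneg h2 h1)
  · simp_rw [hp]
    exact sum_p d r K hK
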